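/- arXiv:2410.09574 — 4 statements merged into one kernel-verified Lean document; each statement's English description precedes it below -/
import Mathlib

section
/- Let Σ be a simple undirected graph with vertex set V and let T, O : V → ℂ be maps such that: (i) T(u) ≠ T(v) for every edge {u,v} of Σ; (ii) for all distinct vertices u, v one has |T(u) − T(v)| ≥ |O(u) − O(v)|, with equality if and only if {u,v} is an edge of Σ; (iii) for any three pairwise adjacent vertices u, v, w, the points T(u), T(v), T(w) are not collinear; (iv) Σ contains no four pairwise adjacent vertices (no K₄ subgraph). Then T is an embedding of Σ into ℂ: T is injective on V; for every edge {u,v} and every vertex w ∉ {u,v}, the point T(w) does not lie on the segment [T(u), T(v)]; and for any two distinct edges {u₁,v₁} and {u₂,v₂}, the segments [T(u₁),T(v₁)] and [T(u₂),T(v₂)] intersect exactly in the image under T of the common vertices of the two edges (in particular they are disjoint if the edges share no vertex). -/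
open scoped Matrix

/-- Twisted-cyclic extension of a vector `x : Fin n → ℝ` to indices in `ℤ`,
with `x_{i+n} = ε • x_i`. -/
noncomputable def vecExt {n : ℕ} (ε : ℝ) (x : Fin n → ℝ) (i : ℤ) : ℝ :=
  if h : 0 < n then
    ε ^ (i / (n : ℤ)) *
      x ⟨(i % (n : ℤ)).toNat, by
        have hn : (0 : ℤ) < (n : ℤ) := by exact_mod_cast h
        have h1 : 0 ≤ i % (n : ℤ) := Int.emod_nonneg i hn.ne'
        have h2 : i % (n : ℤ) < (n : ℤ) := Int.emod_lt_of_pos i hn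
        omega⟩
  else 0

/-- Twisted-cyclic extension of the columns of a matrix. -/
noncomputable def colExt {m n : ℕ} (ε : ℝ) (A : Matrix (Fin m) (Fin n) ℝ) (i : ℤ) :
    Fin m → ℝ :=
  fun r => vecExt ε (fun j => A r j) i

/-- The bracket `⟨i j⟩ = det(λ_i, λ_j)` of two (extended) columns of a `2 × n` matrix. -/
noncomputable def brkt {n : ℕ} (ε : ℝ) (A : Matrix (Fin 2) (Fin n) ℝ) (i j : ℤ) : ℝ :=
  colExt ε A i 0 * colExt ε A j 1 - colExt ε A i 1 * colExt ε A j 0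

/-- The sign `(-1)^(k-1)` used in the twisted cyclic symmetry. -/
noncomputable def sgn (k : ℤ) : ℝ := (-1 : ℝ) ^ (k - 1)

/-- The angle in `[0, π]` between two vectors in `ℝ²`. -/
noncomputable def ang2 (v w : Fin 2 → ℝ) : ℝ :=
  Real.arccos ((v 0 * w 0 + v 1 * w 1) /
    (Real.sqrt (v 0 ^ 2 + v 1 ^ 2) * Real.sqrt (w 0 ^ 2 + w 1 ^ 2)))

/-- The total winding angle of the columns of a `2 × n` matrix. -/
noncomputable def wind {n : ℕ} (ε : ℝ) (A : Matrix (Fin 2) (Fin n) ℝ) : ℝ :=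
  ∑ i ∈ Finset.range n, ang2 (colExt ε A (i : ℤ)) (colExt ε A ((i : ℤ) + 1))

/-- The set `λ⁺_{k,n}`. -/
noncomputable def lamPlus (n : ℕ) (k : ℤ) (A : Matrix (Fin 2) (Fin n) ℝ) : Prop :=
  (∀ i ∈ Finset.range n, 0 < brkt (sgn k) A (i : ℤ) ((i : ℤ) + 1)) ∧
  wind (sgn k) A = ((k : ℝ) - 1) * Real.pi

/-- The set `λ̃⁺_{k,n}`. -/
noncomputable def latPlus (n : ℕ) (k : ℤ) (A : Matrix (Fin 2) (Fin n) ℝ) : Prop :=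
  (∀ i ∈ Finset.range n, 0 < brkt (sgn k) A (i : ℤ) ((i : ℤ) + 1)) ∧
  wind (sgn k) A = ((k : ℝ) + 1) * Real.pi

/-- The set `λλ̃⁺_{k,n}` of pairs with momentum conservation. -/
noncomputable def lamlatPlus (n : ℕ) (k : ℤ) (lam lat : Matrix (Fin 2) (Fin n) ℝ) : Prop :=
  lamPlus n k lam ∧ latPlus n k lat ∧ lam * lat.transpose = 0

/-- The row span of a matrix, as a submodule of `ℝⁿ`. -/
def rowSpan {m n : ℕ} (A : Matrix (Fin m) (Fin n) ℝ) : Submodule ℝ (Fin n → ℝ) :=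
  Submodule.span ℝ (Set.range fun i => A i)

/-- All maximal minors are nonnegative. -/
def nonnegMinors {k n : ℕ} (C : Matrix (Fin k) (Fin n) ℝ) : Prop :=
  ∀ f : Fin k → Fin n, StrictMono f → 0 ≤ (C.submatrix id f).det

/-- All maximal minors are positive. -/
def posMinors {k n : ℕ} (C : Matrix (Fin k) (Fin n) ℝ) : Prop :=
  ∀ f : Fin k → Fin n, StrictMono f → 0 < (C.submatrix id f).det

/-- `C` represents a point of the totally nonnegative Grassmannian `Gr_{≥0}(k,n)`. -/
def GrNonneg {k n : ℕ} (C : Matrix (Fin k) (Fin n) ℝ) : Prop :=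
  C.rank = k ∧ nonnegMinors C

/-- `C` represents a point of the totally positive Grassmannian `Gr_{>0}(k,n)`. -/
def GrPos {k n : ℕ} (C : Matrix (Fin k) (Fin n) ℝ) : Prop :=
  C.rank = k ∧ posMinors C

/-- `alt` negates every second column. -/
def altM {m n : ℕ} (A : Matrix (Fin m) (Fin n) ℝ) : Matrix (Fin m) (Fin n) ℝ :=
  Matrix.of fun i j => (-1 : ℝ) ^ (j : ℕ) * A i j

/-- `(2,0)`-nondegeneracy: consecutive columns are linearly independent. -/
def Nondeg20 (n : ℕ) (k : ℤ) {m : ℕ} (C : Matrix (Fin m) (Fin n) ℝ) : Prop :=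
  ∀ i : ℤ, LinearIndependent ℝ ![colExt (sgn k) C i, colExt (sgn k) C (i + 1)]

/-- `(0,2)`-nondegeneracy: `C_i ∈ span(C_{i+1}, …, C_{i+n-2})`. -/
def Nondeg02 (n : ℕ) (k : ℤ) {m : ℕ} (C : Matrix (Fin m) (Fin n) ℝ) : Prop :=
  ∀ i : ℤ, colExt (sgn k) C i ∈
    Submodule.span ℝ ((fun t : ℤ => colExt (sgn k) C t) '' Set.Icc (i + 1) (i + (n : ℤ) - 2))

/-- Connectedness of a matrix: no cyclic splitting of the columns into a direct sum. -/
def ConnMat (n : ℕ) (k : ℤ) {m : ℕ} (C : Matrix (Fin m) (Fin n) ℝ) : Prop :=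
  ¬ ∃ i j : ℤ, i < j ∧ j < i + (n : ℤ) ∧
    IsCompl (Submodule.span ℝ ((fun t : ℤ => colExt (sgn k) C t) '' Set.Icc i (j - 1)))
      (Submodule.span ℝ ((fun t : ℤ => colExt (sgn k) C t) '' Set.Icc j (i + (n : ℤ) - 1)))

/-- `C` represents a point of `Gr_{≥2}(k,n)`: totally nonnegative, connected,
and 2-nondegenerate. -/
def GrGe2 (n k : ℕ) (C : Matrix (Fin k) (Fin n) ℝ) : Prop :=
  GrNonneg C ∧ Nondeg20 n (k : ℤ) C ∧ Nondeg02 n (k : ℤ) C ∧ ConnMat n (k : ℤ) C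

/-- The orthogonal complement of a subspace of `ℝⁿ` with respect to the dot product. -/
noncomputable def perpSub {n : ℕ} (U : Submodule ℝ (Fin n → ℝ)) : Submodule ℝ (Fin n → ℝ) where
  carrier := {v | ∀ u ∈ U, dotProduct v u = 0}
  zero_mem' := fun u _ => zero_dotProduct u
  add_mem' := fun {a b} ha hb u hu => by
    rw [add_dotProduct, ha u hu, hb u hu, add_zero]
  smul_mem' := fun c v hv u hu => by
    rw [smul_dotProduct, hv u hu, smul_zero]

/-- The planar Mandelstam variables. -/
noncomputable def Mand {n : ℕ} (ε : ℝ) (lam lat : Matrix (Fin 2) (Fin n) ℝ) (i j : ℤ) : ℝ :=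
  ∑ p ∈ Finset.Ioc i j, ∑ q ∈ Finset.Ioc p j, brkt ε lam p q * brkt ε lat p q

/-- `Q` is the magic projector `Q_λ`: it is determined by its action on row vectors
(extended twisted-cyclically with sign `εx`, the brackets of `lam` using sign `εl`). -/
def IsQmat {n : ℕ} (εx εl : ℝ) (lam : Matrix (Fin 2) (Fin n) ℝ)
    (Q : Matrix (Fin n) (Fin n) ℝ) : Prop :=
  ∀ (x : Fin n → ℝ) (b : Fin n),
    Matrix.vecMul x Q b =
      (vecExt εx x (((b : ℕ) : ℤ) - 1) * brkt εl lam ((b : ℕ) : ℤ) (((b : ℕ) : ℤ) + 1)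
        + vecExt εx x ((b : ℕ) : ℤ) * brkt εl lam (((b : ℕ) : ℤ) + 1) (((b : ℕ) : ℤ) - 1)
        + vecExt εx x (((b : ℕ) : ℤ) + 1) * brkt εl lam (((b : ℕ) : ℤ) - 1) ((b : ℕ) : ℤ))
      / (brkt εl lam (((b : ℕ) : ℤ) - 1) ((b : ℕ) : ℤ) *
          brkt εl lam ((b : ℕ) : ℤ) (((b : ℕ) : ℤ) + 1))

/-- The coefficients `t^λ_i`. -/
noncomputable def tcoef {n : ℕ} (ε : ℝ) (lam : Matrix (Fin 2) (Fin n) ℝ) (j : ℤ) : ℝ :=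
  brkt ε lam (j + 1) (j - 1) / (brkt ε lam (j - 1) j * brkt ε lam j (j + 1))

/-- The involution `Θ` on `2 × n` matrices. -/
noncomputable def Theta {n : ℕ} (ε : ℝ) (lam : Matrix (Fin 2) (Fin n) ℝ) :
    Matrix (Fin 2) (Fin n) ℝ :=
  Matrix.of fun r j =>
    (-1 : ℝ) ^ (j : ℕ) * tcoef ε lam ((j : ℕ) : ℤ) * (if r = 0 then lam 0 j else -(lam 1 j))

/-- The Minkowski bilinear form on `ℝ^{2,2} ≅ ℂ²`. -/
noncomputable def minkDot (P Q : ℂ × ℂ) : ℝ :=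
  (P.1 * (starRingEnd ℂ) Q.1 - P.2 * (starRingEnd ℂ) Q.2).re


private lemma stmt14_key1 (l m x1 x2 x3 x4 : ℝ) :
    (1-l)*(1-m)*(x1-x3)^2 + (1-l)*m*(x1-x4)^2 + l*(1-m)*(x2-x3)^2 + l*m*(x2-x4)^2
      - (1-l)*l*(x1-x2)^2 - (1-m)*m*(x3-x4)^2
    = ((1-l)*x1 + l*x2 - (1-m)*x3 - m*x4)^2 := by ring

open Complex in
private lemma stmt14_key2 (l m : ℝ) (z1 z2 z3 z4 w1 w2 w3 w4 : ℂ)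
    (hz : (1-l) • z1 + l • z2 = (1-m) • z3 + m • z4) :
    (1-l)*(1-m)*(normSq (z1-z3) - normSq (w1-w3)) + (1-l)*m*(normSq (z1-z4) - normSq (w1-w4))
      + l*(1-m)*(normSq (z2-z3) - normSq (w2-w3)) + l*m*(normSq (z2-z4) - normSq (w2-w4))
      - (1-l)*l*(normSq (z1-z2) - normSq (w1-w2)) - (1-m)*m*(normSq (z3-z4) - normSq (w3-w4))
    = - normSq ((1-l) • w1 + l • w2 - ((1-m) • w3 + m • w4)) := by
  have hre := congrArg Complex.re hz
  have him := congrArg Complex.im hz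
  simp only [Complex.add_re, Complex.add_im, Complex.real_smul, Complex.mul_re, Complex.mul_im,
    Complex.ofReal_re, Complex.ofReal_im, Complex.sub_re, Complex.sub_im,
    Complex.normSq_apply, zero_mul, sub_zero, zero_add, mul_zero] at hre him ⊢
  linear_combination (stmt14_key1 l m z1.re z2.re z3.re z4.re)
    + (stmt14_key1 l m z1.im z2.im z3.im z4.im)
    - (stmt14_key1 l m w1.re w2.re w3.re w4.re) - (stmt14_key1 l m w1.im w2.im w3.im w4.im)
    + ((1-l)*z1.re + l*z2.re - ((1-m)*z3.re + m*z4.re)) * hre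
    + ((1-l)*z1.im + l*z2.im - ((1-m)*z3.im + m*z4.im)) * him

private lemma stmt14_part1 {V : Type*} (G : SimpleGraph V) (T O : V → ℂ)
    (h1 : ∀ u v : V, G.Adj u v → T u ≠ T v)
    (h2 : ∀ u v : V, u ≠ v →
      ‖O u - O v‖ ≤ ‖T u - T v‖ ∧
      (‖O u - O v‖ = ‖T u - T v‖ ↔ G.Adj u v)) :
    Function.Injective T := by
  intro a b hab
  by_contra hne
  have h0 : ‖T a - T b‖ = 0 := by rw [hab, sub_self, norm_zero]
  have hO : ‖O a - O b‖ = 0 :=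
    le_antisymm (h0 ▸ (h2 a b hne).1) (norm_nonneg _)
  exact h1 a b ((h2 a b hne).2.mp (by rw [hO, h0])) hab

private lemma stmt14_part2 {V : Type*} (G : SimpleGraph V) (T O : V → ℂ)
    (h2 : ∀ u v : V, u ≠ v →
      ‖O u - O v‖ ≤ ‖T u - T v‖ ∧
      (‖O u - O v‖ = ‖T u - T v‖ ↔ G.Adj u v))
    (h3 : ∀ u v w : V, G.Adj u v → G.Adj v w → G.Adj u w →
      ¬ Collinear ℝ ({T u, T v, T w} : Set ℂ)) :
    ∀ u v w : V, G.Adj u v → w ≠ u → w ≠ v → T w ∉ segment ℝ (T u) (T v) := by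
  intro u v w huv hwu hwv hmem
  have hcol : Collinear ℝ ({T u, T w, T v} : Set ℂ) :=
    (mem_segment_iff_wbtw.mp hmem).collinear
  obtain ⟨θ, ⟨h0, h1'⟩, hθ⟩ := (segment_eq_image' (𝕜 := ℝ) (T u) (T v)) ▸ hmem
  have habs : ∀ (r : ℝ) (z : ℂ), 0 ≤ r → ‖r • z‖ = r * ‖z‖ := by
    intro r z hr
    rw [Complex.real_smul, norm_mul, Complex.norm_of_nonneg hr]
  have huw : ‖T u - T w‖ = θ * ‖T u - T v‖ := by
    have h : T u - T w = θ • (T u - T v) := by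
      rw [← hθ]; simp only [Complex.real_smul]; ring
    rw [h, habs θ _ h0]
  have hwv' : ‖T w - T v‖ = (1 - θ) * ‖T u - T v‖ := by
    have h : T w - T v = (1 - θ) • (T u - T v) := by
      rw [← hθ]; simp only [Complex.real_smul, Complex.ofReal_sub, Complex.ofReal_one]; ring
    rw [h, habs _ _ (by linarith)]
  have hsum : ‖T u - T w‖ + ‖T w - T v‖ = ‖T u - T v‖ := by
    rw [huw, hwv']; ring
  have e1 := (h2 u w (Ne.symm hwu)).1
  have e2 := (h2 w v hwv).1
  have eq0 : ‖O u - O v‖ = ‖T u - T v‖ := (h2 u v huv.ne).2.mpr huv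
  have tri : ‖O u - O v‖ ≤ ‖O u - O w‖ + ‖O w - O v‖ :=
    norm_sub_le_norm_sub_add_norm_sub (O u) (O w) (O v)
  have eq1 : ‖O u - O w‖ = ‖T u - T w‖ := le_antisymm e1 (by linarith)
  have eq2 : ‖O w - O v‖ = ‖T w - T v‖ := le_antisymm e2 (by linarith)
  have adj_uw : G.Adj u w := (h2 u w (Ne.symm hwu)).2.mp eq1
  have adj_wv : G.Adj w v := (h2 w v hwv).2.mp eq2
  exact h3 u v w huv adj_wv.symm adj_uw (by rwa [Set.pair_comm (T w) (T v)] at hcol)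

private lemma stmt14_shared {V : Type*} (G : SimpleGraph V) (T : V → ℂ)
    (hB : ∀ u v w : V, G.Adj u v → w ≠ u → w ≠ v → T w ∉ segment ℝ (T u) (T v))
    {u v1 v2 : V} (ha1 : G.Adj u v1) (ha2 : G.Adj u v2) (hv : v1 ≠ v2) {p : ℂ}
    (hp1 : p ∈ segment ℝ (T u) (T v1)) (hp2 : p ∈ segment ℝ (T u) (T v2)) : p = T u := by
  by_contra hne
  rw [segment_eq_image' (𝕜 := ℝ)] at hp1 hp2
  obtain ⟨s, ⟨hs0, hs1⟩, hs⟩ := hp1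
  obtain ⟨t, ⟨ht0, ht1⟩, ht⟩ := hp2
  have hs0' : 0 < s := hs0.lt_of_ne (by
    rintro rfl; simp only [zero_smul, add_zero] at hs; exact hne hs.symm)
  have ht0' : 0 < t := ht0.lt_of_ne (by
    rintro rfl; simp only [zero_smul, add_zero] at ht; exact hne ht.symm)
  have hkey : (s : ℂ) * (T v1 - T u) = (t : ℂ) * (T v2 - T u) := by
    have h := hs.trans ht.symm
    have h' := add_left_cancel h
    simpa only [Complex.real_smul] using h'
  rcases le_total s t with hle | hle
  · have htC : (t:ℂ) ≠ 0 := Complex.ofReal_ne_zero.mpr ht0'.ne'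
    have hmem : T v2 ∈ segment ℝ (T u) (T v1) := by
      rw [segment_eq_image' (𝕜 := ℝ)]
      refine ⟨s/t, ⟨by positivity, by rw [div_le_one ht0']; exact hle⟩, ?_⟩
      simp only [Complex.real_smul, Complex.ofReal_div]
      field_simp
      linear_combination hkey
    exact hB u v1 v2 ha1 ha2.ne' hv.symm hmem
  · have hsC : (s:ℂ) ≠ 0 := Complex.ofReal_ne_zero.mpr hs0'.ne'
    have hmem : T v1 ∈ segment ℝ (T u) (T v2) := by
      rw [segment_eq_image' (𝕜 := ℝ)]
      refine ⟨t/s, ⟨by positivity, by rw [div_le_one hs0']; exact hle⟩, ?_⟩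
      simp only [Complex.real_smul, Complex.ofReal_div]
      field_simp
      linear_combination -hkey
    exact hB u v2 v1 ha2 ha1.ne' hv hmem

private lemma stmt14_disjoint {V : Type*} (G : SimpleGraph V) (T O : V → ℂ)
    (h2 : ∀ u v : V, u ≠ v →
      ‖O u - O v‖ ≤ ‖T u - T v‖ ∧
      (‖O u - O v‖ = ‖T u - T v‖ ↔ G.Adj u v))
    (h4 : ¬ ∃ a b c d : V,
      G.Adj a b ∧ G.Adj a c ∧ G.Adj a d ∧ G.Adj b c ∧ G.Adj b d ∧ G.Adj c d)
    (hB : ∀ u v w : V, G.Adj u v → w ≠ u → w ≠ v → T w ∉ segment ℝ (T u) (T v))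
    {u1 v1 u2 v2 : V} (ha1 : G.Adj u1 v1) (ha2 : G.Adj u2 v2)
    (hd1 : u1 ≠ u2) (hd2 : u1 ≠ v2) (hd3 : v1 ≠ u2) (hd4 : v1 ≠ v2)
    {p : ℂ} (hp1 : p ∈ segment ℝ (T u1) (T v1)) (hp2 : p ∈ segment ℝ (T u2) (T v2)) :
    False := by
  have hq1 := hp1
  have hq2 := hp2
  rw [segment_eq_image' (𝕜 := ℝ)] at hq1 hq2
  obtain ⟨s, ⟨hs0, hs1⟩, hs⟩ := hq1
  obtain ⟨t, ⟨ht0, ht1⟩, ht⟩ := hq2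
  have hs0' : 0 < s := hs0.lt_of_ne (by
    rintro rfl
    simp only [zero_smul, add_zero] at hs
    exact hB u2 v2 u1 ha2 hd1 hd2 (hs ▸ hp2))
  have hs1' : s < 1 := lt_of_le_of_ne hs1 (by
    rintro rfl
    simp only [one_smul, add_sub_cancel] at hs
    exact hB u2 v2 v1 ha2 hd3 hd4 (hs ▸ hp2))
  have ht0' : 0 < t := ht0.lt_of_ne (by
    rintro rfl
    simp only [zero_smul, add_zero] at ht
    exact hB u1 v1 u2 ha1 hd1.symm hd3.symm (ht ▸ hp1))
  have ht1' : t < 1 := lt_of_le_of_ne ht1 (by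
    rintro rfl
    simp only [one_smul, add_sub_cancel] at ht
    exact hB u1 v1 v2 ha1 hd2.symm hd4.symm (ht ▸ hp1))
  have e1 : (1-s) • (T u1) + s • (T v1) = p := by
    rw [← hs]; simp only [Complex.real_smul, Complex.ofReal_sub, Complex.ofReal_one]; ring
  have e2 : (1-t) • (T u2) + t • (T v2) = p := by
    rw [← ht]; simp only [Complex.real_smul, Complex.ofReal_sub, Complex.ofReal_one]; ring
  have E := stmt14_key2 s t (T u1) (T v1) (T u2) (T v2) (O u1) (O v1) (O u2) (O v2)
    (e1.trans e2.symm)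
  have habs : ∀ a b : V, a ≠ b →
      0 ≤ Complex.normSq (T a - T b) - Complex.normSq (O a - O b) := by
    intro a b hab
    have h := (h2 a b hab).1
    rw [sub_nonneg, ← Complex.sq_norm, ← Complex.sq_norm]
    exact pow_le_pow_left₀ (norm_nonneg _) h 2
  have hedge : ∀ a b : V, G.Adj a b →
      Complex.normSq (T a - T b) - Complex.normSq (O a - O b) = 0 := by
    intro a b hab
    have h : ‖O a - O b‖ = ‖T a - T b‖ := (h2 a b hab.ne).2.mpr hab
    rw [← Complex.sq_norm, ← Complex.sq_norm, h, sub_self]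
  rw [hedge u1 v1 ha1, hedge u2 v2 ha2] at E
  have q13 := habs u1 u2 hd1
  have q14 := habs u1 v2 hd2
  have q23 := habs v1 u2 hd3
  have q24 := habs v1 v2 hd4
  have hw := Complex.normSq_nonneg ((1-s) • (O u1) + s • (O v1) - ((1-t) • (O u2) + t • (O v2)))
  have c13 : 0 < (1-s)*(1-t) := mul_pos (by linarith) (by linarith)
  have c14 : 0 < (1-s)*t := mul_pos (by linarith) ht0'
  have c23 : 0 < s*(1-t) := mul_pos hs0' (by linarith)
  have c24 : 0 < s*t := mul_pos hs0' ht0'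
  have m13 : 0 ≤ (1-s)*(1-t) * (Complex.normSq (T u1 - T u2) - Complex.normSq (O u1 - O u2)) :=
    mul_nonneg c13.le q13
  have m14 : 0 ≤ (1-s)*t * (Complex.normSq (T u1 - T v2) - Complex.normSq (O u1 - O v2)) :=
    mul_nonneg c14.le q14
  have m23 : 0 ≤ s*(1-t) * (Complex.normSq (T v1 - T u2) - Complex.normSq (O v1 - O u2)) :=
    mul_nonneg c23.le q23
  have m24 : 0 ≤ s*t * (Complex.normSq (T v1 - T v2) - Complex.normSq (O v1 - O v2)) :=
    mul_nonneg c24.le q24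
  have p13 : (1-s)*(1-t) * (Complex.normSq (T u1 - T u2) - Complex.normSq (O u1 - O u2)) = 0 :=
    le_antisymm (by linarith) m13
  have p14 : (1-s)*t * (Complex.normSq (T u1 - T v2) - Complex.normSq (O u1 - O v2)) = 0 :=
    le_antisymm (by linarith) m14
  have p23 : s*(1-t) * (Complex.normSq (T v1 - T u2) - Complex.normSq (O v1 - O u2)) = 0 :=
    le_antisymm (by linarith) m23
  have p24 : s*t * (Complex.normSq (T v1 - T v2) - Complex.normSq (O v1 - O v2)) = 0 :=
    le_antisymm (by linarith) m24
  have hQ13 := (mul_eq_zero.mp p13).resolve_left c13.ne'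
  have hQ14 := (mul_eq_zero.mp p14).resolve_left c14.ne'
  have hQ23 := (mul_eq_zero.mp p23).resolve_left c23.ne'
  have hQ24 := (mul_eq_zero.mp p24).resolve_left c24.ne'
  have heq : ∀ a b : V, Complex.normSq (T a - T b) - Complex.normSq (O a - O b) = 0 →
      ‖O a - O b‖ = ‖T a - T b‖ := by
    intro a b h
    rw [Complex.norm_def, Complex.norm_def, sub_eq_zero.mp h]
  exact h4 ⟨u1, v1, u2, v2, ha1,
    (h2 u1 u2 hd1).2.mp (heq _ _ hQ13),
    (h2 u1 v2 hd2).2.mp (heq _ _ hQ14),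
    (h2 v1 u2 hd3).2.mp (heq _ _ hQ23),
    (h2 v1 v2 hd4).2.mp (heq _ _ hQ24), ha2⟩

/-- if `T` weakly contracts to `O` off the edges (with equality
exactly on edges), images of edges are nondegenerate, triangles are embedded, and
there is no `K₄`, then `T` is an embedding of the graph `Σ` into `ℂ`. -/
theorem stmt14 {V : Type*} (G : SimpleGraph V) (T O : V → ℂ)
    (h1 : ∀ u v : V, G.Adj u v → T u ≠ T v)
    (h2 : ∀ u v : V, u ≠ v →
      ‖O u - O v‖ ≤ ‖T u - T v‖ ∧
      (‖O u - O v‖ = ‖T u - T v‖ ↔ G.Adj u v))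
    (h3 : ∀ u v w : V, G.Adj u v → G.Adj v w → G.Adj u w →
      ¬ Collinear ℝ ({T u, T v, T w} : Set ℂ))
    (h4 : ¬ ∃ a b c d : V,
      G.Adj a b ∧ G.Adj a c ∧ G.Adj a d ∧ G.Adj b c ∧ G.Adj b d ∧ G.Adj c d) :
    Function.Injective T ∧
    (∀ u v w : V, G.Adj u v → w ≠ u → w ≠ v → T w ∉ segment ℝ (T u) (T v)) ∧
    (∀ u₁ v₁ u₂ v₂ : V, G.Adj u₁ v₁ → G.Adj u₂ v₂ →
      ({u₁, v₁} : Set V) ≠ ({u₂, v₂} : Set V) →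
      segment ℝ (T u₁) (T v₁) ∩ segment ℝ (T u₂) (T v₂) =
        T '' (({u₁, v₁} : Set V) ∩ ({u₂, v₂} : Set V))) := by
  have hB := stmt14_part2 G T O h2 h3
  refine ⟨stmt14_part1 G T O h1 h2, hB, ?_⟩
  intro u₁ v₁ u₂ v₂ ha1 ha2 hsets
  apply Set.Subset.antisymm
  · rintro p ⟨hp1, hp2⟩
    by_cases e11 : u₁ = u₂
    · subst e11
      have hvv : v₁ ≠ v₂ := fun h => hsets (by rw [h])
      have hpu := stmt14_shared G T hB ha1 ha2 hvv hp1 hp2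
      exact ⟨u₁, ⟨by simp, by simp⟩, hpu.symm⟩
    · by_cases e12 : u₁ = v₂
      · subst e12
        have hvv : v₁ ≠ u₂ := by
          intro h; subst h; exact hsets (Set.pair_comm u₁ v₁)
        have hp2' : p ∈ segment ℝ (T u₁) (T u₂) := by rwa [segment_symm] at hp2
        have hpu := stmt14_shared G T hB ha1 ha2.symm hvv hp1 hp2'
        exact ⟨u₁, ⟨by simp, by simp⟩, hpu.symm⟩
      · by_cases e21 : v₁ = u₂
        · subst e21
          have hp1' : p ∈ segment ℝ (T v₁) (T u₁) := by rwa [segment_symm] at hp1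
          have hpu := stmt14_shared G T hB ha1.symm ha2 e12 hp1' hp2
          exact ⟨v₁, ⟨by simp, by simp⟩, hpu.symm⟩
        · by_cases e22 : v₁ = v₂
          · subst e22
            have hp1' : p ∈ segment ℝ (T v₁) (T u₁) := by rwa [segment_symm] at hp1
            have hp2' : p ∈ segment ℝ (T v₁) (T u₂) := by rwa [segment_symm] at hp2
            have hpu := stmt14_shared G T hB ha1.symm ha2.symm e11 hp1' hp2'
            exact ⟨v₁, ⟨by simp, by simp⟩, hpu.symm⟩
          · exact (stmt14_disjoint G T O h2 h4 hB ha1 ha2 e11 e12 e21 e22 hp1 hp2).elim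
  · rintro p ⟨w, ⟨hw1, hw2⟩, rfl⟩
    simp only [Set.mem_insert_iff, Set.mem_singleton_iff] at hw1 hw2
    constructor
    · rcases hw1 with rfl | rfl
      · exact left_mem_segment ℝ _ _
      · exact right_mem_segment ℝ _ _
    · rcases hw2 with rfl | rfl
      · exact left_mem_segment ℝ _ _
      · exact right_mem_segment ℝ _ _
end

section
/- There do not exist points T₁, T₂, T₃, T₄, O₁, O₂, O₃, O₄ ∈ ℂ such that: the open segments (T₁,T₃) and (T₂,T₄) have a common point; |O₁ − O₃| = |T₁ − T₃| and |O₂ − O₄| = |T₂ − T₄|; |O_i − O_{i+1}| ≤ |T_i − T_{i+1}| for i = 1, 2, 3, 4 (indices modulo 4, so the four side inequalities are between consecutive indices 12, 23, 34, 41); and at least one of these four side inequalities is strict. (In words: a planar quadrilateral with crossing diagonals cannot be 'folded' so that both diagonal lengths are preserved while all four side lengths weakly decrease and at least one strictly decreases.) -/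
open scoped Matrix

lemma dist_sq_eq' (z w : ℂ) : dist z w ^ 2 = (z.re - w.re) ^ 2 + (z.im - w.im) ^ 2 := by
  rw [Complex.dist_eq_re_im]
  exact Real.sq_sqrt (by positivity)

lemma stewart' (u v : ℝ) (huv : u + v = 1) (p b c : ℂ) :
    dist p (u • b + v • c) ^ 2
      = u * dist p b ^ 2 + v * dist p c ^ 2 - u * v * dist b c ^ 2 := by
  have hv : v = 1 - u := by linarith
  subst hv
  simp only [dist_sq_eq', Complex.add_re, Complex.add_im, Complex.smul_re, Complex.smul_im,
    smul_eq_mul]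
  ring

/-- a planar quadrilateral with crossing diagonals cannot be
folded so that both diagonal lengths are preserved while all four side lengths
weakly decrease and at least one strictly decreases. -/
theorem stmt15 :
    ¬ ∃ T1 T2 T3 T4 O1 O2 O3 O4 : ℂ,
      (openSegment ℝ T1 T3 ∩ openSegment ℝ T2 T4).Nonempty ∧
      dist O1 O3 = dist T1 T3 ∧ dist O2 O4 = dist T2 T4 ∧
      dist O1 O2 ≤ dist T1 T2 ∧ dist O2 O3 ≤ dist T2 T3 ∧
      dist O3 O4 ≤ dist T3 T4 ∧ dist O4 O1 ≤ dist T4 T1 ∧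
      (dist O1 O2 < dist T1 T2 ∨ dist O2 O3 < dist T2 T3 ∨
        dist O3 O4 < dist T3 T4 ∨ dist O4 O1 < dist T4 T1) := by
  rintro ⟨T1, T2, T3, T4, O1, O2, O3, O4, ⟨X, hX13, hX24⟩, h13, h24, h12, h23, h34, h41, hstr⟩
  obtain ⟨u, v, hu, hv, huv, hXu⟩ := hX24
  -- X lies on the segment [T1, T3]
  have hseg : dist T1 X + dist T3 X = dist T1 T3 := by
    rw [dist_comm T3 X]
    exact dist_add_dist_of_mem_segment (openSegment_subset_segment ℝ T1 T3 hX13)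
  set Z : ℂ := u • O2 + v • O4 with hZ
  have e1 : dist O1 Z ^ 2 = u * dist O1 O2 ^ 2 + v * dist O1 O4 ^ 2 - u * v * dist O2 O4 ^ 2 :=
    stewart' u v huv O1 O2 O4
  have e3 : dist O3 Z ^ 2 = u * dist O3 O2 ^ 2 + v * dist O3 O4 ^ 2 - u * v * dist O2 O4 ^ 2 :=
    stewart' u v huv O3 O2 O4
  have t1 : dist T1 X ^ 2 = u * dist T1 T2 ^ 2 + v * dist T1 T4 ^ 2 - u * v * dist T2 T4 ^ 2 := by
    rw [← hXu]; exact stewart' u v huv T1 T2 T4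
  have t3 : dist T3 X ^ 2 = u * dist T3 T2 ^ 2 + v * dist T3 T4 ^ 2 - u * v * dist T2 T4 ^ 2 := by
    rw [← hXu]; exact stewart' u v huv T3 T2 T4
  -- square versions of hypotheses
  have s12 : dist O1 O2 ^ 2 ≤ dist T1 T2 ^ 2 := pow_le_pow_left₀ dist_nonneg h12 2
  have s23 : dist O3 O2 ^ 2 ≤ dist T3 T2 ^ 2 := by
    rw [dist_comm O3 O2, dist_comm T3 T2]; exact pow_le_pow_left₀ dist_nonneg h23 2
  have s34 : dist O3 O4 ^ 2 ≤ dist T3 T4 ^ 2 := pow_le_pow_left₀ dist_nonneg h34 2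
  have s41 : dist O1 O4 ^ 2 ≤ dist T1 T4 ^ 2 := by
    rw [dist_comm O1 O4, dist_comm T1 T4]; exact pow_le_pow_left₀ dist_nonneg h41 2
  have s24 : dist O2 O4 ^ 2 = dist T2 T4 ^ 2 := by rw [h24]
  have q1 : dist O1 Z ≤ dist T1 X := by
    have : dist O1 Z ^ 2 ≤ dist T1 X ^ 2 := by
      rw [e1, t1, s24]
      have := mul_le_mul_of_nonneg_left s12 hu.le
      have := mul_le_mul_of_nonneg_left s41 hv.le
      linarith
    exact le_of_pow_le_pow_left₀ two_ne_zero dist_nonneg this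
  have q3 : dist O3 Z ≤ dist T3 X := by
    have : dist O3 Z ^ 2 ≤ dist T3 X ^ 2 := by
      rw [e3, t3, s24]
      have := mul_le_mul_of_nonneg_left s23 hu.le
      have := mul_le_mul_of_nonneg_left s34 hv.le
      linarith
    exact le_of_pow_le_pow_left₀ two_ne_zero dist_nonneg this
  -- the strict inequality makes one of q1, q3 strict
  have key : dist O1 Z + dist O3 Z < dist T1 X + dist T3 X := by
    rcases hstr with h | h | h | h
    · have hs : dist O1 O2 ^ 2 < dist T1 T2 ^ 2 := by
        apply pow_lt_pow_left₀ h dist_nonneg two_ne_zero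
      have q1' : dist O1 Z < dist T1 X := by
        refine lt_of_pow_lt_pow_left₀ 2 dist_nonneg ?_
        rw [e1, t1, s24]
        have := mul_lt_mul_of_pos_left hs hu
        have := mul_le_mul_of_nonneg_left s41 hv.le
        linarith
      linarith
    · have hs : dist O3 O2 ^ 2 < dist T3 T2 ^ 2 := by
        rw [dist_comm O3 O2, dist_comm T3 T2]
        exact pow_lt_pow_left₀ h dist_nonneg two_ne_zero
      have q3' : dist O3 Z < dist T3 X := by
        refine lt_of_pow_lt_pow_left₀ 2 dist_nonneg ?_
        rw [e3, t3, s24]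
        have := mul_lt_mul_of_pos_left hs hu
        have := mul_le_mul_of_nonneg_left s34 hv.le
        linarith
      linarith
    · have hs : dist O3 O4 ^ 2 < dist T3 T4 ^ 2 := pow_lt_pow_left₀ h dist_nonneg two_ne_zero
      have q3' : dist O3 Z < dist T3 X := by
        refine lt_of_pow_lt_pow_left₀ 2 dist_nonneg ?_
        rw [e3, t3, s24]
        have := mul_lt_mul_of_pos_left hs hv
        have := mul_le_mul_of_nonneg_left s23 hu.le
        linarith
      linarith
    · have hs : dist O1 O4 ^ 2 < dist T1 T4 ^ 2 := by
        rw [dist_comm O1 O4, dist_comm T1 T4]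
        exact pow_lt_pow_left₀ h dist_nonneg two_ne_zero
      have q1' : dist O1 Z < dist T1 X := by
        refine lt_of_pow_lt_pow_left₀ 2 dist_nonneg ?_
        rw [e1, t1, s24]
        have := mul_lt_mul_of_pos_left hs hv
        have := mul_le_mul_of_nonneg_left s12 hu.le
        linarith
      linarith
  have tri : dist O1 O3 ≤ dist O1 Z + dist Z O3 := dist_triangle O1 Z O3
  rw [dist_comm Z O3] at tri
  rw [h13] at tri
  linarith
end

section
/- Let 2 ≤ k ≤ n−2 and let λ ∈ λ⁺_{k,n}. Suppose that Θ(λ) ∈ λ̃⁺_{k,n}, i.e. [i i+1]_{Θ(λ)} > 0 for all i ∈ {1,…,n} and wind(Θ(λ)) = (k+1)π (so that (λ, Θ(λ)) ∈ λλ̃⁺_{k,n}, orthogonality being automatic). Then n = 2k. -/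
open scoped Matrix

section Stmt17Aux

open Finset

lemma sqrt_scaled (a b c : ℝ) :
    Real.sqrt ((a * b) ^ 2 + (a * -c) ^ 2) = |a| * Real.sqrt (b ^ 2 + c ^ 2) := by
  have h : (a * b) ^ 2 + (a * -c) ^ 2 = a ^ 2 * (b ^ 2 + c ^ 2) := by ring
  rw [h, Real.sqrt_mul (sq_nonneg a), Real.sqrt_sq_eq_abs]

lemma ang2_flip (σ τ : ℝ) (h : σ * τ < 0) (v w : Fin 2 → ℝ) :
    ang2 (fun r => σ * (if r = 0 then v 0 else -(v 1)))
         (fun r => τ * (if r = 0 then w 0 else -(w 1))) = Real.pi - ang2 v w := by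
  unfold ang2
  simp only [show ((1 : Fin 2) = 0) ↔ False by simp, show ((0 : Fin 2) = 0) ↔ True by simp,
    if_true, if_false]
  rw [sqrt_scaled, sqrt_scaled]
  have hσ : |σ| * |τ| ≠ 0 := by
    have := h.ne
    simp only [ne_eq, mul_eq_zero, abs_eq_zero]
    intro hc; rcases hc with hc | hc <;> simp [hc] at this
  have hst : σ * τ = -(|σ| * |τ|) := by
    rw [← abs_mul]; exact (abs_of_neg h).symm ▸ (neg_neg (σ*τ)).symm
  have harg : (σ * v 0 * (τ * w 0) + σ * -v 1 * (τ * -w 1)) /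
      (|σ| * Real.sqrt (v 0 ^ 2 + v 1 ^ 2) * (|τ| * Real.sqrt (w 0 ^ 2 + w 1 ^ 2)))
      = -((v 0 * w 0 + v 1 * w 1) /
        (Real.sqrt (v 0 ^ 2 + v 1 ^ 2) * Real.sqrt (w 0 ^ 2 + w 1 ^ 2))) := by
    have hnum : σ * v 0 * (τ * w 0) + σ * -v 1 * (τ * -w 1)
        = (|σ| * |τ|) * (-(v 0 * w 0 + v 1 * w 1)) := by
      have : σ * v 0 * (τ * w 0) + σ * -v 1 * (τ * -w 1)
          = (σ * τ) * (v 0 * w 0 + v 1 * w 1) := by ring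
      rw [this, hst]; ring
    have hden : |σ| * Real.sqrt (v 0 ^ 2 + v 1 ^ 2) * (|τ| * Real.sqrt (w 0 ^ 2 + w 1 ^ 2))
        = (|σ| * |τ|) * (Real.sqrt (v 0 ^ 2 + v 1 ^ 2) * Real.sqrt (w 0 ^ 2 + w 1 ^ 2)) := by
      ring
    rw [hnum, hden, mul_div_mul_left _ _ hσ, neg_div]
  rw [harg, Real.arccos_neg]

end Stmt17Aux

/-- if `λ ∈ λ⁺_{k,n}` and `Θ(λ) ∈ λ̃⁺_{k,n}` (so that
`(λ, Θ(λ)) ∈ λλ̃⁺_{k,n}`, a perfect t-immersion situation), then `n = 2k`. -/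
theorem stmt17 (n k : ℕ) (hk2 : 2 ≤ k) (hkn : k + 2 ≤ n)
    (lam : Matrix (Fin 2) (Fin n) ℝ) (hlam : lamPlus n (k : ℤ) lam)
    (hth : latPlus n (k : ℤ) (Theta (sgn (k : ℤ)) lam)) :
    n = 2 * k := by
  set ε := sgn (k : ℤ) with hε
  have hn : 0 < n := by omega
  -- colExt formulas
  have hcolA : ∀ (A : Matrix (Fin 2) (Fin n) ℝ) (j : ℕ) (hj : j < n) (r : Fin 2),
      colExt ε A (j : ℤ) r = A r ⟨j, hj⟩ := by
    intro A j hj r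
    simp only [colExt, vecExt, dif_pos hn]
    have hd : (j : ℤ) / (n : ℤ) = 0 :=
      Int.ediv_eq_zero_of_lt (by positivity) (by exact_mod_cast hj)
    have hm : (j : ℤ) % (n : ℤ) = (j : ℤ) :=
      Int.emod_eq_of_lt (by positivity) (by exact_mod_cast hj)
    rw [hd, zpow_zero, one_mul]
    have hfi : ((j : ℤ) % (n : ℤ)).toNat = j := by rw [hm]; exact Int.toNat_natCast j
    exact congrArg (A r) (Fin.ext hfi)
  have hcolB : ∀ (A : Matrix (Fin 2) (Fin n) ℝ) (r : Fin 2),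
      colExt ε A (n : ℤ) r = ε * A r ⟨0, hn⟩ := by
    intro A r
    simp only [colExt, vecExt, dif_pos hn]
    have hn0 : (n : ℤ) ≠ 0 := by exact_mod_cast hn.ne'
    rw [Int.ediv_self hn0, zpow_one]
    have hfi : ((n : ℤ) % (n : ℤ)).toNat = 0 := by rw [Int.emod_self]; rfl
    exact congrArg (fun x => ε * x) (congrArg (A r) (Fin.ext hfi))
  -- the scaling coefficients σ
  set σf : ℕ → ℝ := fun j => (-1 : ℝ) ^ (j % n) * tcoef ε lam ((j % n : ℕ) : ℤ) with hσf
  have hcol0 : ∀ j : ℕ, j ≤ n →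
      colExt ε (Theta ε lam) (j : ℤ) 0 = σf j * colExt ε lam (j : ℤ) 0 := by
    intro j hj
    rcases lt_or_eq_of_le hj with hj' | hj'
    · rw [hcolA _ j hj' 0, hcolA lam j hj' 0]
      have hmod : j % n = j := Nat.mod_eq_of_lt hj'
      simp only [Theta, Matrix.of_apply, hσf, hmod, if_pos rfl]
      try simp
    · subst hj'
      rw [hcolB _ 0, hcolB lam 0]
      simp only [Theta, Matrix.of_apply, hσf, Nat.mod_self, if_pos rfl]
      try simp
      try ring
  have hcol1 : ∀ j : ℕ, j ≤ n →
      colExt ε (Theta ε lam) (j : ℤ) 1 = σf j * -(colExt ε lam (j : ℤ) 1) := by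
    intro j hj
    have h10 : ((1 : Fin 2) = 0) = False := by simp
    rcases lt_or_eq_of_le hj with hj' | hj'
    · rw [hcolA _ j hj' 1, hcolA lam j hj' 1]
      have hmod : j % n = j := Nat.mod_eq_of_lt hj'
      simp only [Theta, Matrix.of_apply, hσf, hmod, h10, if_false]
      try simp
      try ring
    · subst hj'
      rw [hcolB _ 1, hcolB lam 1]
      simp only [Theta, Matrix.of_apply, hσf, Nat.mod_self, h10, if_false]
      try simp
      try ring
  obtain ⟨hlb, hlw⟩ := hlam
  obtain ⟨htb, htw⟩ := hth
  -- sign condition from bracket positivity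
  have hsig : ∀ i : ℕ, i < n → σf i * σf (i + 1) < 0 := by
    intro i hi
    have h1 := hlb i (Finset.mem_range.2 hi)
    have h2 := htb i (Finset.mem_range.2 hi)
    have hc1 : (i : ℤ) + 1 = ((i + 1 : ℕ) : ℤ) := by push_cast; ring
    rw [brkt, hc1] at h1 h2
    rw [hcol0 i hi.le, hcol1 i hi.le, hcol0 (i + 1) (by omega), hcol1 (i + 1) (by omega)] at h2
    by_contra hcon
    push_neg at hcon
    nlinarith [mul_nonneg hcon h1.le]
  -- angle flip, term by term
  have hterm : ∀ i ∈ Finset.range n,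
      ang2 (colExt ε (Theta ε lam) (i : ℤ)) (colExt ε (Theta ε lam) ((i : ℤ) + 1))
        = Real.pi - ang2 (colExt ε lam (i : ℤ)) (colExt ε lam ((i : ℤ) + 1)) := by
    intro i hi
    rw [Finset.mem_range] at hi
    have hc1 : (i : ℤ) + 1 = ((i + 1 : ℕ) : ℤ) := by push_cast; ring
    have hf1 : colExt ε (Theta ε lam) (i : ℤ)
        = fun r => σf i * (if r = 0 then colExt ε lam (i : ℤ) 0
            else -(colExt ε lam (i : ℤ) 1)) := by
      funext r
      fin_cases r
      · simpa using hcol0 i hi.le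
      · simpa using hcol1 i hi.le
    have hf2 : colExt ε (Theta ε lam) (((i + 1 : ℕ) : ℤ))
        = fun r => σf (i + 1) * (if r = 0 then colExt ε lam (((i + 1 : ℕ) : ℤ)) 0
            else -(colExt ε lam (((i + 1 : ℕ) : ℤ)) 1)) := by
      funext r
      fin_cases r
      · simpa using hcol0 (i + 1) (by omega)
      · simpa using hcol1 (i + 1) (by omega)
    rw [hc1, hf1, hf2]
    exact ang2_flip _ _ (hsig i hi) _ _
  have hwind : wind ε (Theta ε lam) = n * Real.pi - wind ε lam := by
    unfold wind
    rw [Finset.sum_congr rfl hterm, Finset.sum_sub_distrib, Finset.sum_const,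
      Finset.card_range, nsmul_eq_mul]
  rw [hwind, hlw] at htw
  have h2 : ((n : ℝ) - 2 * k) * Real.pi = 0 := by push_cast at htw ⊢; linarith
  rcases mul_eq_zero.1 h2 with h | h
  · have : (n : ℝ) = 2 * k := by linarith
    exact_mod_cast this
  · exact absurd h Real.pi_ne_zero
end

section
/- Let C be a real k×n matrix of rank k with columns C_1,…,C_n ∈ ℝ^k, and let z = (z_1,…,z_n) ∈ ℂⁿ with z_i ≠ 0 for every i. For a ∈ ℂ^k write α_i(a) := Σ_{m=1}^{k} a_m·C_{m,i} ∈ ℂ. Then the map a ↦ ((α_1(a),…,α_n(a)), (z_1/α_1(a),…,z_n/α_n(a))) is a bijection from the set A := {a ∈ ℂ^k : α_i(a) ≠ 0 for all i, and Σ_{i=1}^{n} (z_i/α_i(a))·C_i = 0 in ℂ^k} onto the set B := {(y, ỹ) ∈ ℂⁿ × ℂⁿ : y lies in the complex row span of C, Σ_{i=1}^{n} ỹ_i·C_i = 0, and y_i·ỹ_i = z_i for all i}. (Equivalently: the critical points of the master function log Φ with Φ(a) = Π_i α_i(a)^{z_i} of the hyperplane arrangement attached to C are in bijection with the pairs (y,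 ỹ) used to build t-embeddings with prescribed boundary.) -/
open scoped Matrix

lemma rows_li (k n : ℕ) (C : Matrix (Fin k) (Fin n) ℝ) (hC : C.rank = k) :
    LinearIndependent ℝ (fun m => C m) := by
  rw [linearIndependent_iff_card_eq_finrank_span]
  rw [C.rank_eq_finrank_span_row] at hC
  simp [Set.finrank, ← hC]
  rfl

lemma key (k n : ℕ) (C : Matrix (Fin k) (Fin n) ℝ) (hC : C.rank = k)
    (a : Fin k → ℂ) (h : ∀ i, ∑ m, a m * (C m i : ℂ) = 0) : a = 0 := by
  have hli := rows_li k n C hC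
  rw [Fintype.linearIndependent_iff] at hli
  have hre : ∀ i, ∑ m, (a m).re * C m i = 0 := by
    intro i
    have := congrArg Complex.re (h i)
    simpa [Complex.mul_re] using this
  have him : ∀ i, ∑ m, (a m).im * C m i = 0 := by
    intro i
    have := congrArg Complex.im (h i)
    simpa [Complex.mul_im] using this
  have h1 : ∀ m, (a m).re = 0 := by
    apply hli; funext i; simpa [Finset.sum_apply] using hre i
  have h2 : ∀ m, (a m).im = 0 := by
    apply hli; funext i; simpa [Finset.sum_apply] using him i
  funext m
  exact Complex.ext (h1 m) (h2 m)

/-- the critical points of the master function of the hyperplane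
arrangement attached to `C` are in bijection with the pairs `(y, ỹ)` used to build
t-embeddings with prescribed boundary data `z`. -/
theorem stmt18 (n k : ℕ) (C : Matrix (Fin k) (Fin n) ℝ) (hC : C.rank = k)
    (z : Fin n → ℂ) (hz : ∀ i, z i ≠ 0) :
    Set.BijOn
      (fun a : Fin k → ℂ =>
        ((fun i => ∑ m, a m * (C m i : ℂ)),
          (fun i => z i / ∑ m, a m * (C m i : ℂ))))
      {a : Fin k → ℂ | (∀ i, ∑ m, a m * (C m i : ℂ) ≠ 0) ∧
        ∀ m₀ : Fin k, ∑ i, (z i / ∑ m, a m * (C m i : ℂ)) * (C m₀ i : ℂ) = 0}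
      {p : (Fin n → ℂ) × (Fin n → ℂ) |
        p.1 ∈ Submodule.span ℂ (Set.range fun m : Fin k => fun i => (C m i : ℂ)) ∧
        (∀ m₀ : Fin k, ∑ i, p.2 i * (C m₀ i : ℂ) = 0) ∧
        ∀ i, p.1 i * p.2 i = z i} := by
  refine ⟨?_, ?_, ?_⟩
  · rintro a ⟨ha1, ha2⟩
    refine ⟨?_, ha2, fun i => mul_div_cancel₀ _ (ha1 i)⟩
    rw [Submodule.mem_span_range_iff_exists_fun]
    refine ⟨a, ?_⟩
    funext i
    simp [Finset.sum_apply]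
  · rintro a ⟨ha1, _⟩ b ⟨hb1, _⟩ hab
    have h1 : (fun i => ∑ m, a m * (C m i : ℂ)) = (fun i => ∑ m, b m * (C m i : ℂ)) :=
      congrArg Prod.fst hab
    have h2 : ∀ i, ∑ m, (a - b) m * (C m i : ℂ) = 0 := by
      intro i
      have := congrFun h1 i
      simp only [Pi.sub_apply, sub_mul, Finset.sum_sub_distrib]
      rw [this]; ring
    have := key k n C hC (a - b) h2
    exact sub_eq_zero.mp this
  · rintro ⟨y, yt⟩ ⟨hy, hyt, hprod⟩
    rw [Submodule.mem_span_range_iff_exists_fun] at hy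
    obtain ⟨c, hc⟩ := hy
    have hcy : ∀ i, ∑ m, c m * (C m i : ℂ) = y i := by
      intro i
      have := congrFun hc i
      simpa [Finset.sum_apply] using this
    have hy0 : ∀ i, y i ≠ 0 := by
      intro i h0
      exact hz i (by rw [← hprod i]; simp [h0])
    have hyt' : ∀ i, yt i = z i / y i := by
      intro i
      rw [← hprod i]
      field_simp [hy0 i]
      try ring
    refine ⟨c, ⟨fun i => by rw [hcy i]; exact hy0 i, ?_⟩, ?_⟩
    · intro m₀
      have := hyt m₀
      rw [← this]
      apply Finset.sum_congr rfl
      intro i _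
      rw [hcy i, ← hyt' i]
    · refine Prod.ext ?_ ?_ <;> simp only
      · funext i; exact hcy i
      · funext i; rw [hcy i, ← hyt' i]
end
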